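/- Under the assumption that λ is superadditive in the sense λ(s) + λ(t) ≤ λ(s + t) for all s, t ≥ 1, compute_dep on the concatenation of two lists is at least the sum of compute_dep on each list: compute_dep(DL₁ ++ DL₂, λ) ≥ compute_dep(DL₁, λ) + compute_dep(DL₂, λ), for nonempty lists DL₁, DL₂ of strictly positive demands, provided λ is also nonnegative and nondecreasing. -/

import Mathlib

/-- Split a list into its maximal blocks of consecutive nonzero entries,
dropping the zero entries.  `cur` is the (reversed) current block. -/
noncomputable def splitAux : List ℝ → List ℝ → List (List ℝ)
  | cur, [] => if cur = [] then [] else [cur.reverse]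
  | cur, x :: xs =>
    if x = 0 then
      (if cur = [] then splitAux [] xs else cur.reverse :: splitAux [] xs)
    else splitAux (x :: cur) xs

/-- Maximal nonempty sub-lists obtained by splitting at the zero entries. -/
noncomputable def splitAtZeros (l : List ℝ) : List (List ℝ) := splitAux [] l

theorem splitAux_length (l : List ℝ) : ∀ cur, ∀ sl ∈ splitAux cur l,
    sl.length ≤ cur.length + l.length ∧
      ((0:ℝ) ∈ l → sl.length < cur.length + l.length) := by
  induction l with
  | nil =>
    intro cur sl hsl
    simp only [splitAux] at hsl
    split at hsl
    · simp at hsl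
    · simp at hsl
      subst hsl
      simp
  | cons x xs ih =>
    intro cur sl hsl
    simp only [splitAux] at hsl
    by_cases hx : x = 0
    · rw [if_pos hx] at hsl
      have key : sl ∈ splitAux ([] : List ℝ) xs ∨ sl = cur.reverse := by
        split at hsl
        · exact Or.inl hsl
        · rcases List.mem_cons.1 hsl with h | h
          · exact Or.inr h
          · exact Or.inl h
      rcases key with h | h
      · have := ih [] sl h
        constructor
        · simp at this ⊢; omega
        · intro _; simp at this ⊢; omega
      · subst h
        constructor
        · simp
          try omega
        · intro _
          simp
          try omega
    · rw [if_neg hx] at hsl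
      have := ih (x :: cur) sl hsl
      constructor
      · simp at this ⊢; omega
      · intro h0
        rcases List.mem_cons.1 h0 with h | h
        · exact absurd h.symm hx
        · have := this.2 h
          simp at this ⊢; omega

theorem splitAtZeros_length_lt {l : List ℝ} (h0 : (0:ℝ) ∈ l) :
    ∀ sl ∈ splitAtZeros l, sl.length < l.length := by
  intro sl hsl
  have := (splitAux_length l [] sl hsl).2 h0
  simpa using this

/-- The minimum entry of a list (0 for the empty list). -/
noncomputable def minL : List ℝ → ℝ
  | [] => 0
  | x :: xs => xs.foldl min x

theorem foldl_min_mem : ∀ (ys : List ℝ) (x : ℝ), ys.foldl min x ∈ x :: ys := by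
  intro ys
  induction ys with
  | nil => intro x; simp
  | cons y ys ih =>
    intro x
    rw [List.foldl_cons]
    rcases List.mem_cons.1 (ih (min x y)) with h | h
    · rw [h]
      rcases min_choice x y with h' | h' <;> rw [h'] <;> simp
    · exact List.mem_cons_of_mem _ (List.mem_cons_of_mem _ h)

theorem minL_mem : ∀ (l : List ℝ), l ≠ [] → minL l ∈ l := by
  intro l hl
  match l with
  | x :: xs => exact foldl_min_mem xs x

theorem split_sub_minL_length_lt (DL : List ℝ) (h : DL ≠ []) :
    ∀ sl ∈ splitAtZeros (DL.map (fun x => x - minL DL)), sl.length < DL.length := by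
  intro sl hsl
  have h0 : (0:ℝ) ∈ DL.map (fun x => x - minL DL) :=
    List.mem_map.2 ⟨minL DL, minL_mem DL h, sub_self _⟩
  have := splitAtZeros_length_lt h0 sl hsl
  simpa using this

/-- The deprivation cost of a demand list: subtract the minimum `m`, charge
`m · λ(length)`, and recurse on the maximal nonzero blocks of the remainder. -/
noncomputable def computeDep (lam : ℕ → ℝ) : List ℝ → ℝ
  | [] => 0
  | x :: xs =>
    minL (x :: xs) * lam (x :: xs).length +
      (((splitAtZeros ((x :: xs).map (fun y => y - minL (x :: xs)))).attach).map
        (fun sl => computeDep lam sl.1)).sum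
termination_by l => l.length
decreasing_by
  exact split_sub_minL_length_lt _ (List.cons_ne_nil _ _) sl.1 sl.2


theorem foldl_min_le : ∀ (ys : List ℝ) (x : ℝ), ∀ y ∈ x :: ys, ys.foldl min x ≤ y := by
  intro ys
  induction ys with
  | nil => intro x y hy; simp at hy; simp [hy]
  | cons z zs ih =>
    intro x y hy
    rw [List.foldl_cons]
    have h1 : zs.foldl min (min x z) ≤ min x z := ih _ _ (List.mem_cons_self)
    rcases List.mem_cons.1 hy with h | h
    · rw [h]; exact h1.trans (min_le_left _ _)
    · rcases List.mem_cons.1 h with h' | h'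
      · rw [h']; exact h1.trans (min_le_right _ _)
      · exact ih _ _ (List.mem_cons_of_mem _ h')

theorem minL_le {l : List ℝ} (hl : l ≠ []) : ∀ y ∈ l, minL l ≤ y := by
  match l with
  | x :: xs => exact fun y hy => foldl_min_le xs x y hy

theorem foldl_min_map_sub (c : ℝ) : ∀ (ys : List ℝ) (x : ℝ),
    (ys.map (fun y => y - c)).foldl min (x - c) = ys.foldl min x - c := by
  intro ys
  induction ys with
  | nil => simp
  | cons z zs ih =>
    intro x
    simp only [List.map_cons, List.foldl_cons]
    rw [min_sub_sub_right, ih]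

theorem minL_map_sub (c : ℝ) {l : List ℝ} (hl : l ≠ []) :
    minL (l.map (fun y => y - c)) = minL l - c := by
  match l with
  | x :: xs => simpa [minL] using foldl_min_map_sub c xs x

theorem foldl_min_pull : ∀ (bs : List ℝ) (x b : ℝ),
    bs.foldl min (min x b) = min x (bs.foldl min b) := by
  intro bs
  induction bs with
  | nil => simp
  | cons c cs ih =>
    intro x b
    simp only [List.foldl_cons]
    rw [min_assoc, ih]

theorem minL_append {A B : List ℝ} (hA : A ≠ []) (hB : B ≠ []) :
    minL (A ++ B) = min (minL A) (minL B) := by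
  match A, B with
  | a :: as, b :: bs =>
    show (as ++ b :: bs).foldl min a = min (as.foldl min a) (bs.foldl min b)
    rw [List.foldl_append, List.foldl_cons, foldl_min_pull]

theorem computeDep_eq (lam : ℕ → ℝ) {l : List ℝ} (hl : l ≠ []) :
    computeDep lam l = minL l * lam l.length +
      ((splitAtZeros (l.map (fun y => y - minL l))).map (computeDep lam)).sum := by
  obtain ⟨x, xs, rfl⟩ := List.exists_cons_of_ne_nil hl
  rw [computeDep]
  congr 1
  simp [List.attach, List.attachWith, List.map_pmap, List.pmap_eq_map]

theorem computeDep_shift (lam : ℕ → ℝ) {l : List ℝ} (hl : l ≠ []) (c : ℝ) :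
    computeDep lam l = c * lam l.length + computeDep lam (l.map (fun y => y - c)) := by
  have hml : l.map (fun y => y - c) ≠ [] := by simpa using hl
  rw [computeDep_eq lam hl, computeDep_eq lam hml, minL_map_sub c hl, List.length_map,
    List.map_map]
  have : ((fun y => y - (minL l - c)) ∘ fun y => y - c) = (fun y => y - minL l) := by
    funext y; simp only [Function.comp]; ring
  rw [this]
  ring

theorem splitAux_noZero : ∀ (l cur : List ℝ), (∀ x ∈ l, x ≠ 0) → cur ≠ [] →
    splitAux cur l = [cur.reverse ++ l] := by
  intro l
  induction l with
  | nil => intro cur _ hcur; simp [splitAux, hcur]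
  | cons x xs ih =>
    intro cur h hcur
    have hx : x ≠ 0 := h x (List.mem_cons_self)
    rw [splitAux, if_neg hx, ih (x :: cur) (fun y hy => h y (List.mem_cons_of_mem _ hy))
      (List.cons_ne_nil _ _)]
    simp

theorem splitAtZeros_noZero {l : List ℝ} (hl : l ≠ []) (h : ∀ x ∈ l, x ≠ 0) :
    splitAtZeros l = [l] := by
  obtain ⟨x, xs, rfl⟩ := List.exists_cons_of_ne_nil hl
  have hx : x ≠ 0 := h x (List.mem_cons_self)
  rw [splitAtZeros, splitAux, if_neg hx,
    splitAux_noZero xs [x] (fun y hy => h y (List.mem_cons_of_mem _ hy)) (List.cons_ne_nil _ _)]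
  simp

theorem minL_eq_zero {l : List ℝ} (hnn : ∀ x ∈ l, 0 ≤ x) (h0 : (0:ℝ) ∈ l) : minL l = 0 := by
  have hl : l ≠ [] := by rintro rfl; simp at h0
  exact le_antisymm (minL_le hl 0 h0) (hnn _ (minL_mem l hl))

theorem computeDep_bridge (lam : ℕ → ℝ) {l : List ℝ} (hnn : ∀ x ∈ l, 0 ≤ x) :
    computeDep lam l = ((splitAtZeros l).map (computeDep lam)).sum := by
  rcases eq_or_ne l [] with rfl | hl
  · rw [computeDep]
    simp [splitAtZeros, splitAux]
  by_cases h0 : (0:ℝ) ∈ l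
  · rw [computeDep_eq lam hl, minL_eq_zero hnn h0]
    have : l.map (fun y => y - 0) = l := by simp
    rw [this]
    ring
  · have h : ∀ x ∈ l, x ≠ 0 := fun x hx hx0 => h0 (hx0 ▸ hx)
    rw [splitAtZeros_noZero hl h]
    simp

theorem splitAux_append (A : List ℝ) : ∀ (cur B : List ℝ), ∃ P cur',
    splitAux cur (A ++ B) = P ++ splitAux cur' B ∧
    splitAux cur A = P ++ splitAux cur' [] ∧
    cur'.length ≤ cur.length + A.length ∧
    ((0:ℝ) ∈ A → cur'.length < A.length) ∧
    (∀ y ∈ cur', y ∈ cur ∨ (y ∈ A ∧ y ≠ 0)) := by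
  induction A with
  | nil =>
    intro cur B
    exact ⟨[], cur, by simp, by simp, by simp, by simp, fun y hy => Or.inl hy⟩
  | cons x xs ih =>
    intro cur B
    by_cases hx : x = 0
    · obtain ⟨P₀, cur', h1, h2, h3, _, h5⟩ := ih [] B
      refine ⟨if cur = [] then P₀ else cur.reverse :: P₀, cur', ?_, ?_, ?_, ?_, ?_⟩
      · rw [List.cons_append, splitAux, if_pos hx]
        split <;> simp [h1]
      · conv_lhs => rw [splitAux]
        rw [if_pos hx]
        split <;> simp [h2]
      · simp at h3 ⊢; omega
      · intro _; simp at h3 ⊢; omega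
      · intro y hy
        rcases h5 y hy with h | h
        · simp at h
        · exact Or.inr ⟨List.mem_cons_of_mem _ h.1, h.2⟩
    · obtain ⟨P, cur', h1, h2, h3, h4, h5⟩ := ih (x :: cur) B
      refine ⟨P, cur', ?_, ?_, ?_, ?_, ?_⟩
      · rw [List.cons_append, splitAux, if_neg hx]; exact h1
      · conv_lhs => rw [splitAux]
        rw [if_neg hx]; exact h2
      · simp at h3 ⊢; omega
      · intro h0
        have h0' : (0:ℝ) ∈ xs := by
          rcases List.mem_cons.1 h0 with h | h
          · exact absurd h.symm hx
          · exact h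
        have := h4 h0'
        simp at this ⊢; omega
      · intro y hy
        rcases h5 y hy with h | h
        · rcases List.mem_cons.1 h with h' | h'
          · exact Or.inr ⟨h' ▸ List.mem_cons_self, h' ▸ hx⟩
          · exact Or.inl h'
        · exact Or.inr ⟨List.mem_cons_of_mem _ h.1, h.2⟩

theorem sum_splitAux_merge (lam : ℕ → ℝ) (N : ℕ)
    (H : ∀ P Q : List ℝ, P ≠ [] → Q ≠ [] → (∀ x ∈ P, 0 < x) → (∀ x ∈ Q, 0 < x) →
      P.length + Q.length ≤ N → computeDep lam P + computeDep lam Q ≤ computeDep lam (P ++ Q)) :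
    ∀ (B cur₁ cur₂ : List ℝ), (∀ x ∈ cur₁, 0 < x) → (∀ x ∈ cur₂, 0 < x) → cur₂ ≠ [] →
      (∀ x ∈ B, 0 ≤ x) →
      cur₁.length + cur₂.length + B.length ≤ N + 1 →
      ((0:ℝ) ∉ B → cur₁.length + cur₂.length + B.length ≤ N) →
      computeDep lam cur₂.reverse + ((splitAux cur₁ B).map (computeDep lam)).sum ≤
        ((splitAux (cur₁ ++ cur₂) B).map (computeDep lam)).sum := by
  intro B
  induction B with
  | nil =>
    intro cur₁ cur₂ hp1 hp2 hc2 _ _ hsz2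
    have hsz : cur₁.length + cur₂.length ≤ N := by
      have := hsz2 (by simp); simpa using this
    have hne : cur₁ ++ cur₂ ≠ [] := by simp [hc2]
    rcases eq_or_ne cur₁ [] with rfl | hc1
    · simp [splitAux, hc2]
    · rw [splitAux, if_neg hc1]
      conv_rhs => rw [splitAux]
      rw [if_neg hne]
      simp only [List.map_cons, List.map_nil, List.sum_cons, List.sum_nil, add_zero,
        List.reverse_append]
      have := H cur₂.reverse cur₁.reverse (by simpa using hc2) (by simpa using hc1)
        (fun x hx => hp2 x (List.mem_reverse.1 hx)) (fun x hx => hp1 x (List.mem_reverse.1 hx))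
        (by simp; omega)
      linarith
  | cons x xs ih =>
    intro cur₁ cur₂ hp1 hp2 hc2 hnn hsz1 hsz2
    have hne : cur₁ ++ cur₂ ≠ [] := by simp [hc2]
    by_cases hx : x = 0
    · conv_rhs => rw [splitAux]
      rw [if_pos hx, if_neg hne]
      conv_lhs => rw [splitAux]
      rw [if_pos hx]
      rcases eq_or_ne cur₁ [] with rfl | hc1
      · rw [if_pos rfl]
        simp
      · rw [if_neg hc1]
        simp only [List.map_cons, List.sum_cons, List.reverse_append]
        have := H cur₂.reverse cur₁.reverse (by simpa using hc2) (by simpa using hc1)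
          (fun y hy => hp2 y (List.mem_reverse.1 hy)) (fun y hy => hp1 y (List.mem_reverse.1 hy))
          (by simp at hsz1 ⊢; omega)
        linarith
    · conv_rhs => rw [splitAux]
      rw [if_neg hx]
      conv_lhs => rw [splitAux]
      rw [if_neg hx]
      have hxpos : 0 < x := lt_of_le_of_ne (hnn x (List.mem_cons_self)) (Ne.symm hx)
      have hcons : x :: (cur₁ ++ cur₂) = (x :: cur₁) ++ cur₂ := rfl
      rw [hcons]
      refine ih (x :: cur₁) cur₂ ?_ hp2 hc2 (fun y hy => hnn y (List.mem_cons_of_mem _ hy)) ?_ ?_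
      · intro y hy
        rcases List.mem_cons.1 hy with h | h
        · exact h ▸ hxpos
        · exact hp1 y h
      · simp at hsz1 ⊢; omega
      · intro h0
        have h0' : (0:ℝ) ∉ x :: xs := by
          intro h; rcases List.mem_cons.1 h with h' | h'
          · exact hx h'.symm
          · exact h0 h'
        have := hsz2 h0'
        simp at this ⊢; omega

theorem sum_splitAtZeros_append (lam : ℕ → ℝ) (N : ℕ)
    (H : ∀ P Q : List ℝ, P ≠ [] → Q ≠ [] → (∀ x ∈ P, 0 < x) → (∀ x ∈ Q, 0 < x) →
      P.length + Q.length ≤ N → computeDep lam P + computeDep lam Q ≤ computeDep lam (P ++ Q))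
    (A B : List ℝ) (hA : ∀ x ∈ A, 0 ≤ x) (hB : ∀ x ∈ B, 0 ≤ x)
    (h0 : (0:ℝ) ∈ A ∨ (0:ℝ) ∈ B) (hlen : A.length + B.length ≤ N + 1) :
    ((splitAtZeros A).map (computeDep lam)).sum + ((splitAtZeros B).map (computeDep lam)).sum ≤
      ((splitAtZeros (A ++ B)).map (computeDep lam)).sum := by
  obtain ⟨P, cur', h1, h2, h3, h4, h5⟩ := splitAux_append A [] B
  have e1 : splitAtZeros (A ++ B) = P ++ splitAux cur' B := h1
  have e2 : splitAtZeros A = P ++ splitAux cur' [] := h2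
  rcases eq_or_ne cur' [] with rfl | hc
  · rw [e1, e2]
    have : splitAux ([] : List ℝ) [] = [] := by simp [splitAux]
    rw [this]
    simp [splitAtZeros]
  · have hpos : ∀ y ∈ cur', 0 < y := by
      intro y hy
      rcases h5 y hy with h | h
      · simp at h
      · exact lt_of_le_of_ne (hA y h.1) (Ne.symm h.2)
    have e3 : splitAux cur' [] = [cur'.reverse] := by rw [splitAux, if_neg hc]
    have key := sum_splitAux_merge lam N H B [] cur' (by simp) hpos hc hB
      (by simp at h3 ⊢; omega)
      (by
        intro h0B
        have h0A : (0:ℝ) ∈ A := h0.resolve_right h0B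
        have := h4 h0A
        simp; omega)
    rw [e1, e2, e3]
    simp only [List.map_append, List.sum_append, List.map_cons, List.map_nil,
      List.sum_cons, List.sum_nil, add_zero] at key ⊢
    simp only [List.nil_append] at key
    have : ((splitAtZeros B).map (computeDep lam)).sum =
        ((splitAux [] B).map (computeDep lam)).sum := rfl
    linarith [key]

theorem main_aux (lam : ℕ → ℝ)
    (hsuper : ∀ s t : ℕ, 1 ≤ s → 1 ≤ t → lam s + lam t ≤ lam (s + t)) :
    ∀ n : ℕ, ∀ A B : List ℝ, A ≠ [] → B ≠ [] → (∀ x ∈ A, 0 < x) → (∀ x ∈ B, 0 < x) →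
      A.length + B.length ≤ n →
      computeDep lam A + computeDep lam B ≤ computeDep lam (A ++ B) := by
  intro n
  induction n with
  | zero =>
    intro A B hA hB _ _ hlen
    exfalso
    have : 1 ≤ A.length := List.length_pos_iff.2 hA
    omega
  | succ n ih =>
    intro A B hA hB hpA hpB hlen
    set m := min (minL A) (minL B) with hm
    have hmA : m ≤ minL A := min_le_left _ _
    have hmB : m ≤ minL B := min_le_right _ _
    have hm0 : 0 < m := lt_min (hpA _ (minL_mem A hA)) (hpB _ (minL_mem B hB))
    set A' := A.map (fun y => y - m) with hA'
    set B' := B.map (fun y => y - m) with hB'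
    have hnnA' : ∀ x ∈ A', 0 ≤ x := by
      intro x hx
      obtain ⟨y, hy, rfl⟩ := List.mem_map.1 hx
      have := minL_le hA y hy
      linarith
    have hnnB' : ∀ x ∈ B', 0 ≤ x := by
      intro x hx
      obtain ⟨y, hy, rfl⟩ := List.mem_map.1 hx
      have := minL_le hB y hy
      linarith
    have h0 : (0:ℝ) ∈ A' ∨ (0:ℝ) ∈ B' := by
      rcases min_cases (minL A) (minL B) with ⟨he, _⟩ | ⟨he, _⟩
      · exact Or.inl (List.mem_map.2 ⟨minL A, minL_mem A hA, by rw [← hm] at he; rw [he]; ring⟩)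
      · exact Or.inr (List.mem_map.2 ⟨minL B, minL_mem B hB, by rw [← hm] at he; rw [he]; ring⟩)
    have hAB : A ++ B ≠ [] := by simp [hA]
    have sA := computeDep_shift lam hA m
    have sB := computeDep_shift lam hB m
    have sAB := computeDep_shift lam hAB m
    have hmapAB : (A ++ B).map (fun y => y - m) = A' ++ B' := List.map_append
    rw [hmapAB] at sAB
    have bA := computeDep_bridge lam hnnA'
    have bB := computeDep_bridge lam hnnB'
    have bAB := computeDep_bridge lam (by
      intro x hx
      rcases List.mem_append.1 hx with h | h
      exacts [hnnA' x h, hnnB' x h])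
    have hZC := sum_splitAtZeros_append lam n ih A' B' hnnA' hnnB' h0 (by
      simp only [hA', hB', List.length_map]
      omega)
    have hlam : lam A.length + lam B.length ≤ lam (A ++ B).length := by
      rw [List.length_append]
      exact hsuper _ _ (List.length_pos_iff.2 hA) (List.length_pos_iff.2 hB)
    have hmul : m * lam A.length + m * lam B.length ≤ m * lam (A ++ B).length := by
      rw [← mul_add]
      exact mul_le_mul_of_nonneg_left hlam hm0.le
    rw [sA, sB, sAB, bA, bB, bAB]
    rw [List.length_append] at hmul ⊢
    linarith
/-- If `λ` is nonnegative, nondecreasing, and superadditive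
(`λ(s) + λ(t) ≤ λ(s+t)` for `s, t ≥ 1`), then `compute_dep` on the
concatenation of two nonempty lists of strictly positive demands is at least
the sum of `compute_dep` on each list. -/
theorem computeDep_superadditive (lam : ℕ → ℝ)
    (hnn : ∀ n, 0 ≤ lam n) (hmono : Monotone lam)
    (hsuper : ∀ s t : ℕ, 1 ≤ s → 1 ≤ t → lam s + lam t ≤ lam (s + t))
    (DL1 DL2 : List ℝ) (h1 : DL1 ≠ []) (h2 : DL2 ≠ [])
    (hp1 : ∀ x ∈ DL1, 0 < x) (hp2 : ∀ x ∈ DL2, 0 < x) :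
    computeDep lam DL1 + computeDep lam DL2 ≤ computeDep lam (DL1 ++ DL2) := by
  exact main_aux lam hsuper (DL1.length + DL2.length) DL1 DL2 h1 h2 hp1 hp2 le_rfl
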